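/- Let v(·,λ) be as above and suppose λ₀ is such that v(ℓ, λ₀) = 0 (a Dirichlet eigenvalue). Then (∂v/∂λ)(ℓ, λ₀) = (∫₀^ℓ v(y,λ₀)² dy) / v'(ℓ, λ₀); in particular (∂v/∂λ)(ℓ, λ₀) ≠ 0, so Dirichlet eigenvalues are simple zeros of λ ↦ v(ℓ,λ). -/

import Mathlib

open Set

/-- Grönwall-type estimate specialised to real-valued functions on `Icc a b`. -/
lemma my_gron {a b : ℝ} (f f' : ℝ → ℝ) {C δ : ℝ}
    (hf : ∀ x ∈ Icc a b, HasDerivWithinAt f (f' x) (Icc a b) x)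
    (hb : ∀ x ∈ Icc a b, |f' x| ≤ C * |f x|)
    (ha : |f a| ≤ δ) : ∀ x ∈ Icc a b, |f x| ≤ δ * Real.exp (C * (x - a)) := by
  have hcont : ContinuousOn f (Icc a b) := fun x hx => (hf x hx).continuousWithinAt
  intro x hx
  have := norm_le_gronwallBound_of_norm_deriv_right_le (f := f) (f' := f') (δ := δ) (K := C)
    (ε := 0) (a := a) (b := b) hcont
    (fun t ht => (hf t (Ico_subset_Icc_self ht)).mono_of_mem_nhdsWithin
      (Icc_mem_nhdsGE_of_mem ht))
    (by simpa using ha)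
    (fun t ht => by simpa using hb t (Ico_subset_Icc_self ht)) x hx
  simpa [gronwallBound_ε0] using this

/-- If `v (ℓ, λ₀) = 0` (a Dirichlet eigenvalue), then
`(∂v/∂λ)(ℓ, λ₀) = (∫₀^ℓ v(y,λ₀)² dy) / v'(ℓ, λ₀)` and in particular
`(∂v/∂λ)(ℓ, λ₀) ≠ 0`: Dirichlet eigenvalues are simple zeros of `λ ↦ v(ℓ, λ)`. -/
theorem dirichlet_eigenvalue_simple
    (V : ℝ → ℝ) (ℓ : ℝ) (hℓ : 0 < ℓ) (hV : ContinuousOn V (Icc 0 ℓ))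
    (v vx dv dvx : ℝ → ℝ → ℝ)
    (hx1 : ∀ lam : ℝ, ∀ x ∈ Icc 0 ℓ,
      HasDerivWithinAt (fun y => v y lam) (vx x lam) (Icc 0 ℓ) x)
    (hx2 : ∀ lam : ℝ, ∀ x ∈ Icc 0 ℓ,
      HasDerivWithinAt (fun y => vx y lam) (V x * v x lam - lam * v x lam) (Icc 0 ℓ) x)
    (h0 : ∀ lam : ℝ, v 0 lam = 0) (h0' : ∀ lam : ℝ, vx 0 lam = 1)
    (hd1 : ∀ x ∈ Icc 0 ℓ, ∀ lam : ℝ, HasDerivAt (fun mu => v x mu) (dv x lam) lam)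
    (hd2 : ∀ x ∈ Icc 0 ℓ, ∀ lam : ℝ, HasDerivAt (fun mu => vx x mu) (dvx x lam) lam)
    (lam₀ : ℝ) (hzero : v ℓ lam₀ = 0) :
    dv ℓ lam₀ = (∫ y in (0:ℝ)..ℓ, (v y lam₀) ^ 2) / vx ℓ lam₀ ∧ dv ℓ lam₀ ≠ 0 := by
  have hl0 : (0:ℝ) ∈ Icc (0:ℝ) ℓ := ⟨le_rfl, hℓ.le⟩
  have hll : ℓ ∈ Icc (0:ℝ) ℓ := ⟨hℓ.le, le_rfl⟩
  -- bound for V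
  obtain ⟨K, hK⟩ := isCompact_Icc.exists_bound_of_continuousOn hV
  have hK0 : 0 ≤ K := le_trans (norm_nonneg _) (hK 0 hl0)
  set C : ℝ := 1 + K + (|lam₀| + 1) with hC
  have hCpos : 0 ≤ C := by
    rw [hC]; have := abs_nonneg lam₀; linarith
  -- continuity in x
  have hcv : ∀ μ : ℝ, ContinuousOn (fun y => v y μ) (Icc 0 ℓ) :=
    fun μ x hx => (hx1 μ x hx).continuousWithinAt
  have hcvx : ∀ μ : ℝ, ContinuousOn (fun y => vx y μ) (Icc 0 ℓ) :=
    fun μ x hx => (hx2 μ x hx).continuousWithinAt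
  -- energy derivative
  have hE : ∀ μ : ℝ, ∀ y ∈ Icc 0 ℓ,
      HasDerivWithinAt (fun y => v y μ ^ 2 + vx y μ ^ 2)
        (2 * v y μ * vx y μ * (1 + V y - μ)) (Icc 0 ℓ) y := by
    intro μ y hy
    have h1 := ((hx1 μ y hy).fun_pow 2).fun_add ((hx2 μ y hy).fun_pow 2)
    refine h1.congr_deriv ?_
    norm_num
    ring
  have hEb : ∀ μ : ℝ, |μ| ≤ |lam₀| + 1 → ∀ y ∈ Icc 0 ℓ,
      |2 * v y μ * vx y μ * (1 + V y - μ)| ≤ C * |v y μ ^ 2 + vx y μ ^ 2| := by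
    intro μ hμ y hy
    have hVy : |V y| ≤ K := by simpa using hK y hy
    have h2 : |2 * v y μ * vx y μ| ≤ v y μ ^ 2 + vx y μ ^ 2 := by
      rw [abs_le]; constructor <;> nlinarith [sq_nonneg (v y μ + vx y μ), sq_nonneg (v y μ - vx y μ)]
    have h3 : |1 + V y - μ| ≤ C := by
      rw [hC]
      calc |1 + V y - μ| ≤ |(1:ℝ)| + |V y| + |μ| := by
            calc |1 + V y - μ| ≤ |1 + V y| + |μ| := abs_sub _ _
              _ ≤ |(1:ℝ)| + |V y| + |μ| := by gcongr; exact abs_add_le _ _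
        _ ≤ 1 + K + (|lam₀| + 1) := by simp; linarith
    have habs : |v y μ ^ 2 + vx y μ ^ 2| = v y μ ^ 2 + vx y μ ^ 2 :=
      abs_of_nonneg (by positivity)
    calc |2 * v y μ * vx y μ * (1 + V y - μ)| = |2 * v y μ * vx y μ| * |1 + V y - μ| :=
          abs_mul _ _
      _ ≤ (v y μ ^ 2 + vx y μ ^ 2) * C := by
          apply mul_le_mul h2 h3 (abs_nonneg _) (by positivity)
      _ = C * |v y μ ^ 2 + vx y μ ^ 2| := by rw [habs]; ring
  -- forward bound
  set M : ℝ := Real.sqrt (Real.exp (C * ℓ)) with hMdef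
  have hM : ∀ μ : ℝ, |μ| ≤ |lam₀| + 1 → ∀ y ∈ Icc 0 ℓ, |v y μ| ≤ M := by
    intro μ hμ y hy
    have := my_gron (fun y => v y μ ^ 2 + vx y μ ^ 2)
      (fun y => 2 * v y μ * vx y μ * (1 + V y - μ)) (hE μ) (hEb μ hμ)
      (show |v 0 μ ^ 2 + vx 0 μ ^ 2| ≤ 1 from le_of_eq (by simp [h0, h0'])) y hy
    have h1 : v y μ ^ 2 ≤ Real.exp (C * ℓ) := by
      have h2 : v y μ ^ 2 + vx y μ ^ 2 ≤ Real.exp (C * (y - 0)) :=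
        le_trans (le_abs_self _) (by simpa using this)
      have h4 : C * (y - 0) ≤ C * ℓ := by
        apply mul_le_mul_of_nonneg_left _ hCpos
        simpa using hy.2
      nlinarith [sq_nonneg (vx y μ), Real.exp_le_exp.2 h4]
    calc |v y μ| = Real.sqrt (v y μ ^ 2) := (Real.sqrt_sq_eq_abs _).symm
      _ ≤ M := Real.sqrt_le_sqrt h1
  -- backward uniqueness: vx ℓ lam₀ ≠ 0
  have hvxl : vx ℓ lam₀ ≠ 0 := by
    intro hvx
    set E : ℝ → ℝ := fun y => v y lam₀ ^ 2 + vx y lam₀ ^ 2 with hEdef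
    set E' : ℝ → ℝ := fun y => 2 * v y lam₀ * vx y lam₀ * (1 + V y - lam₀) with hE'def
    have hg : ∀ t ∈ Icc (0:ℝ) ℓ, HasDerivWithinAt (fun t => E (ℓ - t)) (-E' (ℓ - t)) (Icc 0 ℓ) t := by
      intro t ht
      have hmem : ℓ - t ∈ Icc (0:ℝ) ℓ := ⟨by linarith [ht.2], by linarith [ht.1]⟩
      have hφ : HasDerivWithinAt (fun t : ℝ => ℓ - t) (-1) (Icc 0 ℓ) t := by
        simpa using (hasDerivWithinAt_id t (Icc (0:ℝ) ℓ)).const_sub ℓ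
      have h := (hE lam₀ (ℓ - t) hmem).comp t hφ
        (fun y hy => ⟨by linarith [hy.2], by linarith [hy.1]⟩)
      have h2 : HasDerivWithinAt (fun t => E (ℓ - t))
          (2 * v (ℓ - t) lam₀ * vx (ℓ - t) lam₀ * (1 + V (ℓ - t) - lam₀) * (-1)) (Icc 0 ℓ) t := h
      rw [show (2 * v (ℓ - t) lam₀ * vx (ℓ - t) lam₀ * (1 + V (ℓ - t) - lam₀) * (-1) : ℝ)
        = -E' (ℓ - t) by simp only [hE'def]; ring] at h2
      exact h2
    have hgb : ∀ t ∈ Icc (0:ℝ) ℓ, |(-E' (ℓ - t))| ≤ C * |E (ℓ - t)| := by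
      intro t ht
      have hmem : ℓ - t ∈ Icc (0:ℝ) ℓ := ⟨by linarith [ht.2], by linarith [ht.1]⟩
      rw [abs_neg]; exact hEb lam₀ (by linarith [abs_nonneg lam₀]) (ℓ - t) hmem
    have := my_gron (fun t => E (ℓ - t)) (fun t => -E' (ℓ - t)) hg hgb
      (show |E (ℓ - 0)| ≤ 0 from le_of_eq (by simp [hEdef, hzero, hvx])) ℓ hll
    simp [hEdef, h0, h0'] at this
    linarith
  -- Wronskian identity
  have hWron : ∀ μ : ℝ, vx ℓ lam₀ * v ℓ μ - v ℓ lam₀ * vx ℓ μ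
      = (μ - lam₀) * ∫ y in (0:ℝ)..ℓ, v y lam₀ * v y μ := by
    intro μ
    set W : ℝ → ℝ := fun x => vx x lam₀ * v x μ - v x lam₀ * vx x μ with hWdef
    have hWc : ContinuousOn W (Icc 0 ℓ) :=
      ((hcvx lam₀).mul (hcv μ)).sub ((hcv lam₀).mul (hcvx μ))
    have hWd : ∀ x ∈ Ioo (0:ℝ) ℓ, HasDerivWithinAt W
        ((μ - lam₀) * (v x lam₀ * v x μ)) (Ioi x) x := by
      intro x hx
      have hxI : x ∈ Icc (0:ℝ) ℓ := Ioo_subset_Icc_self hx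
      have h := (((hx2 lam₀ x hxI).fun_mul (hx1 μ x hxI)).fun_sub
        ((hx1 lam₀ x hxI).fun_mul (hx2 μ x hxI)))
      have h2 : HasDerivWithinAt W ((μ - lam₀) * (v x lam₀ * v x μ)) (Icc 0 ℓ) x := by
        refine h.congr_deriv ?_
        ring
      exact h2.mono_of_mem_nhdsWithin (Icc_mem_nhdsGT_of_mem ⟨hxI.1, hx.2⟩)
    have hint : IntervalIntegrable (fun x => (μ - lam₀) * (v x lam₀ * v x μ))
        MeasureTheory.volume 0 ℓ := by
      apply ContinuousOn.intervalIntegrable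
      rw [uIcc_of_le hℓ.le]
      exact continuousOn_const.mul ((hcv lam₀).mul (hcv μ))
    have := intervalIntegral.integral_eq_sub_of_hasDeriv_right_of_le hℓ.le hWc hWd hint
    rw [intervalIntegral.integral_const_mul] at this
    have hW0 : W 0 = 0 := by simp [hWdef, h0, h0']
    rw [hW0, sub_zero] at this
    exact this.symm
  -- the integral of v² is positive
  have hIpos : 0 < ∫ y in (0:ℝ)..ℓ, (v y lam₀) ^ 2 := by
    apply intervalIntegral.integral_pos hℓ
    · exact ((hcv lam₀).mul (hcv lam₀)).congr (fun y _ => (sq (v y lam₀)))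
    · intro x _; positivity
    · by_contra hcon
      push_neg at hcon
      have hvz : ∀ y ∈ Icc (0:ℝ) ℓ, v y lam₀ = 0 := by
        intro y hy
        have := hcon y hy
        nlinarith [sq_nonneg (v y lam₀)]
      have hz : HasDerivWithinAt (fun y => v y lam₀) 0 (Icc 0 ℓ) 0 :=
        (hasDerivWithinAt_const (0:ℝ) (Icc (0:ℝ) ℓ) (0:ℝ)).congr
          (fun y hy => hvz y hy) (hvz 0 hl0)
      have hu := uniqueDiffOn_Icc hℓ 0 hl0
      have e1 : derivWithin (fun y => v y lam₀) (Icc 0 ℓ) 0 = vx 0 lam₀ :=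
        (hx1 lam₀ 0 hl0).derivWithin hu
      have e2 : derivWithin (fun y => v y lam₀) (Icc 0 ℓ) 0 = 0 := hz.derivWithin hu
      rw [h0'] at e1
      rw [e1] at e2
      exact one_ne_zero e2
  -- continuity of μ ↦ ∫ v(y,lam₀) v(y,μ)
  have hGcont : Filter.Tendsto (fun μ => ∫ y in (0:ℝ)..ℓ, v y lam₀ * v y μ)
      (nhds lam₀) (nhds (∫ y in (0:ℝ)..ℓ, (v y lam₀) ^ 2)) := by
    have hIcc : ∀ᶠ μ in nhds lam₀, μ ∈ Icc (lam₀ - 1) (lam₀ + 1) :=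
      Icc_mem_nhds (by linarith) (by linarith)
    have hmeas : ∀ᶠ μ in nhds lam₀, MeasureTheory.AEStronglyMeasurable
        (fun y => v y lam₀ * v y μ) (MeasureTheory.volume.restrict (Set.uIoc (0:ℝ) ℓ)) := by
      filter_upwards with μ
      apply ContinuousOn.aestronglyMeasurable _ measurableSet_uIoc
      have : Set.uIoc (0:ℝ) ℓ ⊆ Icc 0 ℓ := by
        rw [uIoc_of_le hℓ.le]; exact Ioc_subset_Icc_self
      exact ((hcv lam₀).mul (hcv μ)).mono this
    apply intervalIntegral.tendsto_integral_filter_of_dominated_convergence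
      (fun y => |v y lam₀| * M) hmeas
    · filter_upwards [hIcc] with μ hμ
      apply MeasureTheory.ae_of_all
      intro y hy
      have hyI : y ∈ Icc (0:ℝ) ℓ := by
        rw [uIoc_of_le hℓ.le] at hy; exact Ioc_subset_Icc_self hy
      have hμ' : |μ| ≤ |lam₀| + 1 := by
        rw [abs_le]
        cases' abs_le.1 (le_refl |lam₀|) with h1 h2
        constructor <;> [linarith [hμ.1]; linarith [hμ.2]]
      calc ‖v y lam₀ * v y μ‖ = |v y lam₀| * |v y μ| := abs_mul _ _
        _ ≤ |v y lam₀| * M := by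
            apply mul_le_mul_of_nonneg_left (hM μ hμ' y hyI) (abs_nonneg _)
    · apply ContinuousOn.intervalIntegrable
      rw [uIcc_of_le hℓ.le]
      exact ((hcv lam₀).abs).mul continuousOn_const
    · apply MeasureTheory.ae_of_all
      intro y hy
      have hyI : y ∈ Icc (0:ℝ) ℓ := by
        rw [uIoc_of_le hℓ.le] at hy; exact Ioc_subset_Icc_self hy
      have := ((hd1 y hyI lam₀).continuousAt).tendsto
      have h2 := Filter.Tendsto.const_mul (v y lam₀) this
      simpa [sq] using h2
  -- derivative of L at lam₀ and slope argument
  have hL : HasDerivAt (fun μ => vx ℓ lam₀ * v ℓ μ - v ℓ lam₀ * vx ℓ μ)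
      (vx ℓ lam₀ * dv ℓ lam₀) lam₀ := by
    have := ((hd1 ℓ hll lam₀).const_mul (vx ℓ lam₀)).fun_sub ((hd2 ℓ hll lam₀).const_mul (v ℓ lam₀))
    simpa [hzero] using this
  have hslope := hasDerivAt_iff_tendsto_slope.1 hL
  have hslope_eq : ∀ μ ∈ ({lam₀}ᶜ : Set ℝ),
      slope (fun μ => vx ℓ lam₀ * v ℓ μ - v ℓ lam₀ * vx ℓ μ) lam₀ μ
      = ∫ y in (0:ℝ)..ℓ, v y lam₀ * v y μ := by
    intro μ hμ
    have hne : μ - lam₀ ≠ 0 := sub_ne_zero.2 hμ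
    rw [slope_def_field]
    rw [hWron μ]
    have hL0 : vx ℓ lam₀ * v ℓ lam₀ - v ℓ lam₀ * vx ℓ lam₀ = 0 := by ring
    rw [hL0, sub_zero, div_eq_iff hne]
    ring
  have hG2 : Filter.Tendsto (fun μ => ∫ y in (0:ℝ)..ℓ, v y lam₀ * v y μ)
      (nhdsWithin lam₀ {lam₀}ᶜ) (nhds (vx ℓ lam₀ * dv ℓ lam₀)) := by
    apply hslope.congr'
    filter_upwards [self_mem_nhdsWithin] with μ hμ using hslope_eq μ hμ
  have hG3 : Filter.Tendsto (fun μ => ∫ y in (0:ℝ)..ℓ, v y lam₀ * v y μ)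
      (nhdsWithin lam₀ {lam₀}ᶜ) (nhds (∫ y in (0:ℝ)..ℓ, (v y lam₀) ^ 2)) :=
    hGcont.mono_left nhdsWithin_le_nhds
  have hkey : vx ℓ lam₀ * dv ℓ lam₀ = ∫ y in (0:ℝ)..ℓ, (v y lam₀) ^ 2 :=
    tendsto_nhds_unique hG2 hG3
  constructor
  · field_simp
    linarith [hkey]
  · intro hdv
    rw [hdv, mul_zero] at hkey
    linarith
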